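/- Let σ be a duplicate-free sequence over V and let Z be a set of t ≥ 1 elements of σ. Then f(σ) − f(σ−Z) ≤ t·( d_in·M_in + d_out·M_out ) ≤ t·(d_in + d_out)·max{M_in, M_out}, where M_in = max{ h({(u,z)}) : (u,z) ∈ E, z ∈ Z } and M_out = max{ h({(z,u)}) : (z,u) ∈ E, z ∈ Z } (each taken to be 0 if the corresponding set of edges is empty). -/

import Mathlib

open Finset

namespace RoseNets

variable {V : Type*} [Fintype V] [DecidableEq V]

/-- The edge set induced by a sequence `σ`: all edges `(u,v) ∈ E` with `u` occurring
strictly before `v` in `σ`, together with all self-loops `(v,v) ∈ E` with `v ∈ σ`. -/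
def inducedEdges (E : Finset (V × V)) (σ : List V) : Finset (V × V) :=
  E.filter fun e =>
    (∃ i j : Fin σ.length, i < j ∧ σ.get i = e.1 ∧ σ.get j = e.2) ∨
      (e.1 = e.2 ∧ e.1 ∈ σ)

/-- The networked submodular objective `f(σ) = h(E(σ))`. -/
def fval (E : Finset (V × V)) (h : Finset (V × V) → ℝ) (σ : List V) : ℝ :=
  h (inducedEdges E σ)

/-- Maximum in-degree of the graph. -/
def dIn (E : Finset (V × V)) : ℕ :=
  Finset.univ.sup fun v => (E.filter fun e => e.2 = v).card

/-- Maximum out-degree of the graph. -/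
def dOut (E : Finset (V × V)) : ℕ :=
  Finset.univ.sup fun v => (E.filter fun e => e.1 = v).card

/-- The robust objective `g_τ(σ) = min_{Z ⊆ V, |Z| ≤ τ} f(σ − Z)`. -/
noncomputable def gRob (E : Finset (V × V)) (h : Finset (V × V) → ℝ) (τ : ℕ)
    (σ : List V) : ℝ :=
  ((Finset.univ : Finset V).powerset.filter fun Z => Z.card ≤ τ).inf'
    ⟨∅, by simp⟩ fun Z => fval E h (σ.filter fun v => v ∉ Z)

/-- Marginal gain of an edge with respect to an edge set: `h(e|S) = h(S ∪ {e}) − h(S)`. -/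
def marg (h : Finset (V × V) → ℝ) (S : Finset (V × V)) (e : V × V) : ℝ :=
  h (insert e S) - h S

/-- Candidate edges for a Sequence Greedy step over ground set `U`. -/
def candidates (E : Finset (V × V)) (U : Finset V) (σ : List V) : Finset (V × V) :=
  E.filter fun e => e.1 ∈ U ∧ e.2 ∈ U ∧ e.2 ∉ σ

/-- Candidate edges when only one slot remains: the tail must already be selected,
or the edge is a self-loop. -/
def lastCandidates (E : Finset (V × V)) (U : Finset V) (σ : List V) : Finset (V × V) :=
  (candidates E U σ).filter fun e => e.1 = e.2 ∨ e.1 ∈ σ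

/-- One step of Sequence Greedy with budget `m` over ground set `U`. -/
inductive GreedyStep (E : Finset (V × V)) (h : Finset (V × V) → ℝ) (U : Finset V) (m : ℕ) :
    List V → List V → Prop
  | normal (σ : List V) (e : V × V) (hlen : σ.length + 1 < m)
      (hmem : e ∈ candidates E U σ)
      (hmax : ∀ e' ∈ candidates E U σ,
        marg h (inducedEdges E σ) e' ≤ marg h (inducedEdges E σ) e) :
      GreedyStep E h U m σ
        (if e.1 = e.2 ∨ e.1 ∈ σ then σ ++ [e.2] else σ ++ [e.1, e.2])
  | last (σ : List V) (e : V × V) (hlen : σ.length + 1 = m)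
      (hmem : e ∈ lastCandidates E U σ)
      (hmax : ∀ e' ∈ lastCandidates E U σ,
        marg h (inducedEdges E σ) e' ≤ marg h (inducedEdges E σ) e) :
      GreedyStep E h U m σ (σ ++ [e.2])

/-- `σ` is a possible output of Sequence Greedy with budget `m` over ground set `U`. -/
def IsGreedyOutput (E : Finset (V × V)) (h : Finset (V × V) → ℝ) (U : Finset V) (m : ℕ)
    (σ : List V) : Prop :=
  Relation.ReflTransGen (GreedyStep E h U m) [] σ ∧ σ.length = m

/-- `σ` is a possible output of the RoseNets algorithm with parameters `(k, τ)`. -/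
def IsRoseNetsOutput (E : Finset (V × V)) (h : Finset (V × V) → ℝ) (k τ : ℕ)
    (σ : List V) : Prop :=
  ∃ σ1 σ2 : List V,
    IsGreedyOutput E h Finset.univ τ σ1 ∧
    IsGreedyOutput E h (Finset.univ \ σ1.toFinset) (k - τ) σ2 ∧
    σ = σ1 ++ σ2


/-- Largest single-edge utility among edges entering the set `Z` (0 if there are none). -/
noncomputable def maxInUtilitySet (E : Finset (V × V)) (h : Finset (V × V) → ℝ)
    (Z : Finset V) : ℝ :=
  if hne : (E.filter fun e => e.2 ∈ Z).Nonempty then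
    (E.filter fun e => e.2 ∈ Z).sup' hne fun e => h {e}
  else 0

/-- Largest single-edge utility among edges leaving the set `Z` (0 if there are none). -/
noncomputable def maxOutUtilitySet (E : Finset (V × V)) (h : Finset (V × V) → ℝ)
    (Z : Finset V) : ℝ :=
  if hne : (E.filter fun e => e.1 ∈ Z).Nonempty then
    (E.filter fun e => e.1 ∈ Z).sup' hne fun e => h {e}
  else 0


def Before {α : Type*} (l : List α) (u v : α) : Prop :=
  ∃ s t, l = s ++ v :: t ∧ u ∈ s

lemma before_of_sublist {α : Type*} {l₁ l₂ : List α} (hs : List.Sublist l₁ l₂) {u v : α}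
    (hb : Before l₁ u v) : Before l₂ u v := by
  induction hs with
  | slnil => exact hb
  | cons a hs ih =>
      obtain ⟨s, t, heq, hu⟩ := ih hb
      exact ⟨a :: s, t, by simp [heq], List.mem_cons_of_mem _ hu⟩
  | cons_cons a hs ih =>
      obtain ⟨s, t, heq, hu⟩ := hb
      cases s with
      | nil => simp at hu
      | cons b s₁ =>
          simp only [List.cons_append, List.cons.injEq] at heq
          obtain ⟨rfl, heq⟩ := heq
          rcases List.mem_cons.1 hu with rfl | hu₁
          · have hv : v ∈ _ := hs.subset (by rw [heq]; exact List.mem_append_right _ List.mem_cons_self)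
            obtain ⟨s₂, t₂, rfl⟩ := List.append_of_mem hv
            exact ⟨u :: s₂, t₂, by simp, List.mem_cons_self⟩
          · obtain ⟨s₂, t₂, heq₂, hu₂⟩ := ih ⟨s₁, t, heq, hu₁⟩
            exact ⟨a :: s₂, t₂, by simp [heq₂], List.mem_cons_of_mem _ hu₂⟩

lemma before_iff {α : Type*} {l : List α} {u v : α} :
    (∃ i j : Fin l.length, i < j ∧ l.get i = u ∧ l.get j = v) ↔ Before l u v := by
  constructor
  · rintro ⟨i, j, hij, rfl, rfl⟩
    refine ⟨l.take j, l.drop (j+1), ?_, ?_⟩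
    · conv_lhs => rw [← List.take_append_drop (j : ℕ) l]
      congr 1
      rw [List.get_eq_getElem]
      exact (List.getElem_cons_drop j.isLt).symm
    · have hij' : (i : ℕ) < (j : ℕ) := hij
      have hlt : (i : ℕ) < (l.take (j : ℕ)).length := by
        have := i.isLt; simp [List.length_take]; omega
      have : (l.take (j:ℕ))[(i:ℕ)] = l.get i := by
        rw [List.getElem_take, List.get_eq_getElem]
      rw [← this]
      exact List.getElem_mem _
  · rintro ⟨s, t, rfl, hu⟩
    obtain ⟨i, hi, rfl⟩ := List.getElem_of_mem hu
    have hlen : s.length < (s ++ v :: t).length := by simp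
    refine ⟨⟨i, by simp; omega⟩, ⟨s.length, hlen⟩, by simpa using hi, ?_, ?_⟩
    · simp [List.get_eq_getElem, List.getElem_append_left, hi]
    · simp [List.get_eq_getElem, List.getElem_append_right]

lemma before_filter {α : Type*} {l : List α} {u v : α} (p : α → Bool) (hb : Before l u v)
    (hu : p u = true) (hv : p v = true) : Before (l.filter p) u v := by
  obtain ⟨s, t, rfl, hus⟩ := hb
  exact ⟨s.filter p, t.filter p, by simp [List.filter_append, List.filter_cons, hv],
    List.mem_filter.2 ⟨hus, hu⟩⟩


lemma diff_le_sum_singletons {V : Type*} [DecidableEq V]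
    (E : Finset (V × V)) (h : Finset (V × V) → ℝ)
    (h0 : h ∅ = 0) (hnn : ∀ S ⊆ E, 0 ≤ h S)
    (hsubmod : ∀ A B : Finset (V × V), A ⊆ B → B ⊆ E → ∀ e ∈ E, e ∉ B →
      h (insert e B) - h B ≤ h (insert e A) - h A) :
    ∀ D A : Finset (V × V), D ⊆ E → A ⊆ E → h (A ∪ D) - h A ≤ ∑ e ∈ D, h {e} := by
  intro D
  induction D using Finset.induction_on with
  | empty => intro A _ _; simp
  | @insert e D' hne ih =>
      intro A hD hA
      have he : e ∈ E := hD (Finset.mem_insert_self _ _)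
      have hD' : D' ⊆ E := fun x hx => hD (Finset.mem_insert_of_mem hx)
      have hAD' : A ∪ D' ⊆ E := Finset.union_subset hA hD'
      have hstep : h (insert e (A ∪ D')) - h (A ∪ D') ≤ h {e} := by
        by_cases hin : e ∈ A ∪ D'
        · rw [Finset.insert_eq_self.2 hin]
          simpa using hnn {e} (Finset.singleton_subset_iff.2 he)
        · have := hsubmod ∅ (A ∪ D') (Finset.empty_subset _) hAD' e he hin
          simpa [h0] using this
      have hih := ih A hD' hA
      rw [Finset.union_insert, Finset.sum_insert hne]
      linarith


lemma mem_inducedEdges {E : Finset (V × V)} {l : List V} {e : V × V} :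
    e ∈ inducedEdges E l ↔ e ∈ E ∧ (Before l e.1 e.2 ∨ (e.1 = e.2 ∧ e.1 ∈ l)) := by
  rw [inducedEdges, Finset.mem_filter, before_iff]

/-- The removal-loss bound from Case 2.2 of the proof of Theorem 2: removing a set `Z`
of `t ≥ 1` elements of `σ` loses at most `t·(d_in·M_in + d_out·M_out)`, which is at
most `t·(d_in + d_out)·max{M_in, M_out}`. -/
theorem multi_removal_loss_bound
    (E : Finset (V × V)) (h : Finset (V × V) → ℝ)
    (h0 : h ∅ = 0) (hnn : ∀ S ⊆ E, 0 ≤ h S)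
    (hmono : ∀ A B : Finset (V × V), A ⊆ B → B ⊆ E → h A ≤ h B)
    (hsubmod : ∀ A B : Finset (V × V), A ⊆ B → B ⊆ E → ∀ e ∈ E, e ∉ B →
      h (insert e B) - h B ≤ h (insert e A) - h A)
    (σ : List V) (hnodup : σ.Nodup)
    (Z : Finset V) (hZσ : Z ⊆ σ.toFinset) (t : ℕ) (ht : t = Z.card) (ht1 : 1 ≤ t) :
    fval E h σ - fval E h (σ.filter fun v => v ∉ Z) ≤
        (t : ℝ) * ((dIn E : ℝ) * maxInUtilitySet E h Z +
          (dOut E : ℝ) * maxOutUtilitySet E h Z) ∧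
      (t : ℝ) * ((dIn E : ℝ) * maxInUtilitySet E h Z +
          (dOut E : ℝ) * maxOutUtilitySet E h Z) ≤
        (t : ℝ) * ((dIn E : ℝ) + (dOut E : ℝ)) *
          max (maxInUtilitySet E h Z) (maxOutUtilitySet E h Z) := by
  constructor
  · -- main removal-loss bound
    set σ' := σ.filter (fun v => v ∉ Z) with hσ'
    set A := inducedEdges E σ' with hA
    set B := inducedEdges E σ with hB
    have hBE : B ⊆ E := Finset.filter_subset _ _
    have hAB : A ⊆ B := by
      intro e he
      rw [mem_inducedEdges] at he ⊢
      refine ⟨he.1, ?_⟩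
      rcases he.2 with hb | ⟨h12, hmem⟩
      · exact Or.inl (before_of_sublist List.filter_sublist hb)
      · exact Or.inr ⟨h12, List.filter_sublist.subset hmem⟩
    have hdichot : ∀ e ∈ B \ A, e ∈ E ∧ (e.2 ∈ Z ∨ e.1 ∈ Z) := by
      intro e he
      rw [Finset.mem_sdiff] at he
      obtain ⟨heB, heA⟩ := he
      rw [mem_inducedEdges] at heB
      refine ⟨heB.1, ?_⟩
      by_contra hc
      push_neg at hc
      apply heA
      rw [mem_inducedEdges]
      refine ⟨heB.1, ?_⟩
      rcases heB.2 with hb | ⟨h12, hmem⟩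
      · exact Or.inl (before_filter _ hb (by simpa using hc.2) (by simpa using hc.1))
      · exact Or.inr ⟨h12, List.mem_filter.2 ⟨hmem, by simpa using hc.2⟩⟩
    have hmain : h B - h A ≤ ∑ e ∈ B \ A, h {e} := by
      have := diff_le_sum_singletons E h h0 hnn hsubmod (B \ A) A
        (fun x hx => hBE (Finset.mem_sdiff.1 hx).1) (hAB.trans hBE)
      rwa [Finset.union_sdiff_of_subset hAB] at this
    set Din := (B \ A).filter (fun e => e.2 ∈ Z) with hDin
    set Dout := (B \ A).filter (fun e => e.2 ∉ Z) with hDout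
    have hsplit : ∑ e ∈ B \ A, h {e} = ∑ e ∈ Din, h {e} + ∑ e ∈ Dout, h {e} :=
      (Finset.sum_filter_add_sum_filter_not _ _ _).symm
    have hDinSub : Din ⊆ E.filter (fun e => e.2 ∈ Z) := by
      intro e he
      rw [hDin, Finset.mem_filter] at he
      exact Finset.mem_filter.2 ⟨hBE (Finset.mem_sdiff.1 he.1).1, he.2⟩
    have hDoutSub : Dout ⊆ E.filter (fun e => e.1 ∈ Z) := by
      intro e he
      rw [hDout, Finset.mem_filter] at he
      have := hdichot e he.1
      exact Finset.mem_filter.2 ⟨this.1, this.2.resolve_left he.2⟩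
    have hMin : ∀ e ∈ Din, h {e} ≤ maxInUtilitySet E h Z := by
      intro e he
      have heE := hDinSub he
      rw [maxInUtilitySet, dif_pos ⟨e, heE⟩]
      exact Finset.le_sup' (fun e => h {e}) heE
    have hMout : ∀ e ∈ Dout, h {e} ≤ maxOutUtilitySet E h Z := by
      intro e he
      have heE := hDoutSub he
      rw [maxOutUtilitySet, dif_pos ⟨e, heE⟩]
      exact Finset.le_sup' (fun e => h {e}) heE
    have hMin0 : 0 ≤ maxInUtilitySet E h Z := by
      rw [maxInUtilitySet]
      split_ifs with hne
      · obtain ⟨e, he⟩ := hne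
        exact le_trans (hnn {e} (Finset.singleton_subset_iff.2
          (Finset.mem_filter.1 he).1)) (Finset.le_sup' (fun e => h {e}) he)
      · exact le_refl 0
    have hMout0 : 0 ≤ maxOutUtilitySet E h Z := by
      rw [maxOutUtilitySet]
      split_ifs with hne
      · obtain ⟨e, he⟩ := hne
        exact le_trans (hnn {e} (Finset.singleton_subset_iff.2
          (Finset.mem_filter.1 he).1)) (Finset.le_sup' (fun e => h {e}) he)
      · exact le_refl 0
    have hcardIn : (E.filter (fun e => e.2 ∈ Z)).card ≤ Z.card * dIn E := by
      have hsub : (E.filter (fun e => e.2 ∈ Z)) ⊆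
          Z.biUnion (fun z => E.filter (fun e => e.2 = z)) := by
        intro e he
        rw [Finset.mem_filter] at he
        exact Finset.mem_biUnion.2 ⟨e.2, he.2, Finset.mem_filter.2 ⟨he.1, rfl⟩⟩
      calc (E.filter (fun e => e.2 ∈ Z)).card
          ≤ (Z.biUnion (fun z => E.filter (fun e => e.2 = z))).card :=
            Finset.card_le_card hsub
        _ ≤ ∑ z ∈ Z, (E.filter (fun e => e.2 = z)).card := Finset.card_biUnion_le
        _ ≤ ∑ _z ∈ Z, dIn E :=
            Finset.sum_le_sum fun z _ => by rw [dIn]; exact Finset.le_sup (f := fun v => (E.filter (fun e => e.2 = v)).card) (Finset.mem_univ z)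
        _ = Z.card * dIn E := by rw [Finset.sum_const, smul_eq_mul]
    have hcardOut : (E.filter (fun e => e.1 ∈ Z)).card ≤ Z.card * dOut E := by
      have hsub : (E.filter (fun e => e.1 ∈ Z)) ⊆
          Z.biUnion (fun z => E.filter (fun e => e.1 = z)) := by
        intro e he
        rw [Finset.mem_filter] at he
        exact Finset.mem_biUnion.2 ⟨e.1, he.2, Finset.mem_filter.2 ⟨he.1, rfl⟩⟩
      calc (E.filter (fun e => e.1 ∈ Z)).card
          ≤ (Z.biUnion (fun z => E.filter (fun e => e.1 = z))).card :=
            Finset.card_le_card hsub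
        _ ≤ ∑ z ∈ Z, (E.filter (fun e => e.1 = z)).card := Finset.card_biUnion_le
        _ ≤ ∑ _z ∈ Z, dOut E :=
            Finset.sum_le_sum fun z _ => by rw [dOut]; exact Finset.le_sup (f := fun v => (E.filter (fun e => e.1 = v)).card) (Finset.mem_univ z)
        _ = Z.card * dOut E := by rw [Finset.sum_const, smul_eq_mul]
    have hIn : ∑ e ∈ Din, h {e} ≤ (t : ℝ) * (dIn E : ℝ) * maxInUtilitySet E h Z := by
      calc ∑ e ∈ Din, h {e} ≤ ∑ _e ∈ Din, maxInUtilitySet E h Z :=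
            Finset.sum_le_sum hMin
        _ = (Din.card : ℝ) * maxInUtilitySet E h Z := by
            rw [Finset.sum_const, nsmul_eq_mul]
        _ ≤ (t : ℝ) * (dIn E : ℝ) * maxInUtilitySet E h Z := by
            apply mul_le_mul_of_nonneg_right _ hMin0
            have : Din.card ≤ t * dIn E := by
              rw [ht]; exact le_trans (Finset.card_le_card hDinSub) hcardIn
            calc (Din.card : ℝ) ≤ ((t * dIn E : ℕ) : ℝ) := by exact_mod_cast this
              _ = (t : ℝ) * (dIn E : ℝ) := by push_cast; ring
    have hOut : ∑ e ∈ Dout, h {e} ≤ (t : ℝ) * (dOut E : ℝ) * maxOutUtilitySet E h Z := by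
      calc ∑ e ∈ Dout, h {e} ≤ ∑ _e ∈ Dout, maxOutUtilitySet E h Z :=
            Finset.sum_le_sum hMout
        _ = (Dout.card : ℝ) * maxOutUtilitySet E h Z := by
            rw [Finset.sum_const, nsmul_eq_mul]
        _ ≤ (t : ℝ) * (dOut E : ℝ) * maxOutUtilitySet E h Z := by
            apply mul_le_mul_of_nonneg_right _ hMout0
            have : Dout.card ≤ t * dOut E := by
              rw [ht]; exact le_trans (Finset.card_le_card hDoutSub) hcardOut
            calc (Dout.card : ℝ) ≤ ((t * dOut E : ℕ) : ℝ) := by exact_mod_cast this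
              _ = (t : ℝ) * (dOut E : ℝ) := by push_cast; ring
    have : fval E h σ - fval E h σ' = h B - h A := rfl
    rw [this]
    calc h B - h A ≤ ∑ e ∈ B \ A, h {e} := hmain
      _ = ∑ e ∈ Din, h {e} + ∑ e ∈ Dout, h {e} := hsplit
      _ ≤ (t : ℝ) * (dIn E : ℝ) * maxInUtilitySet E h Z +
          (t : ℝ) * (dOut E : ℝ) * maxOutUtilitySet E h Z := add_le_add hIn hOut
      _ = (t : ℝ) * ((dIn E : ℝ) * maxInUtilitySet E h Z +
          (dOut E : ℝ) * maxOutUtilitySet E h Z) := by ring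
  · -- second inequality
    have hMin0 : 0 ≤ maxInUtilitySet E h Z := by
      rw [maxInUtilitySet]
      split_ifs with hne
      · obtain ⟨e, he⟩ := hne
        exact le_trans (hnn {e} (Finset.singleton_subset_iff.2
          (Finset.mem_filter.1 he).1)) (Finset.le_sup' (fun e => h {e}) he)
      · exact le_refl 0
    have hMout0 : 0 ≤ maxOutUtilitySet E h Z := by
      rw [maxOutUtilitySet]
      split_ifs with hne
      · obtain ⟨e, he⟩ := hne
        exact le_trans (hnn {e} (Finset.singleton_subset_iff.2
          (Finset.mem_filter.1 he).1)) (Finset.le_sup' (fun e => h {e}) he)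
      · exact le_refl 0
    have ht0 : (0 : ℝ) ≤ (t : ℝ) := Nat.cast_nonneg t
    have hdI : (0 : ℝ) ≤ (dIn E : ℝ) := Nat.cast_nonneg _
    have hdO : (0 : ℝ) ≤ (dOut E : ℝ) := Nat.cast_nonneg _
    have ha : (dIn E : ℝ) * maxInUtilitySet E h Z ≤
        (dIn E : ℝ) * max (maxInUtilitySet E h Z) (maxOutUtilitySet E h Z) :=
      mul_le_mul_of_nonneg_left (le_max_left _ _) hdI
    have hb : (dOut E : ℝ) * maxOutUtilitySet E h Z ≤
        (dOut E : ℝ) * max (maxInUtilitySet E h Z) (maxOutUtilitySet E h Z) :=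
      mul_le_mul_of_nonneg_left (le_max_right _ _) hdO
    calc (t : ℝ) * ((dIn E : ℝ) * maxInUtilitySet E h Z +
          (dOut E : ℝ) * maxOutUtilitySet E h Z)
        ≤ (t : ℝ) * ((dIn E : ℝ) * max (maxInUtilitySet E h Z) (maxOutUtilitySet E h Z) +
          (dOut E : ℝ) * max (maxInUtilitySet E h Z) (maxOutUtilitySet E h Z)) :=
          mul_le_mul_of_nonneg_left (add_le_add ha hb) ht0
      _ = (t : ℝ) * ((dIn E : ℝ) + (dOut E : ℝ)) *
          max (maxInUtilitySet E h Z) (maxOutUtilitySet E h Z) := by ring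


end RoseNets
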